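/- Consider the algebra H of type B₂ over ℂ given by the quiver with vertices 1, 2, a loop ε₁ at vertex 1 with ε₁² = 0, and an arrow α : 2 → 1. For the indecomposable injective module I₁ with rank vector (1,2) (dimension vector (2,2)), the variety of locally free submodules of rank vector (1,1) is isomorphic to ℙ¹(ℂ), and hence has Euler characteristic 2; for all other rank vectors r ∈ {(0,0),(1,0),(1,2)} the locally free submodule variety is a point. Consequently F_{I₁}(t₁,t₂) = 1 + t₁ + 2t₁t₂ + t₁t₂². -/

import Mathlib

/-- A representation of the algebra `H = H(C, D, Ω)` over `ℂ`, given by `ℂ`-vector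
spaces `carrier i` at each vertex, the loop actions `eps i` with `(eps i)^{cᵢ} = 0`, and
arrow maps `arrow i j : M_j → M_i` for `(i,j) ∈ Ω`, subject to the defining relations
(H1), (H2) of `H`. -/
structure HRep (n : ℕ) (cdeg : Fin n → ℕ) (Ω : Set (Fin n × Fin n))
    (C : Matrix (Fin n) (Fin n) ℤ) where
  carrier : Fin n → Type
  [acg : ∀ i, AddCommGroup (carrier i)]
  [mod : ∀ i, Module ℂ (carrier i)]
  eps : ∀ i, carrier i →ₗ[ℂ] carrier i
  arrow : ∀ i j, carrier j →ₗ[ℂ] carrier i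
  arrow_zero : ∀ i j, (i, j) ∉ Ω → arrow i j = 0
  nil : ∀ i, (eps i) ^ (cdeg i) = 0
  rel : ∀ i j, (i, j) ∈ Ω →
    ((eps i) ^ ((C j i).natAbs)) ∘ₗ (arrow i j) = (arrow i j) ∘ₗ ((eps j) ^ ((C i j).natAbs))

attribute [instance] HRep.acg HRep.mod

variable {n : ℕ} {cdeg : Fin n → ℕ} {Ω : Set (Fin n × Fin n)} {C : Matrix (Fin n) (Fin n) ℤ}

/-- A subrepresentation: a family of subspaces stable under the loops and the arrows. -/
def HRep.IsSub (M : HRep n cdeg Ω C) (U : ∀ i, Submodule ℂ (M.carrier i)) : Prop :=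
  (∀ i, Submodule.map (M.eps i) (U i) ≤ U i) ∧
  (∀ i j, Submodule.map (M.arrow i j) (U j) ≤ U i)

/-- `U` is a free `H_i = ℂ[εᵢ]/(εᵢ^{cᵢ})`-submodule of `M.carrier i` of rank `r`:
it has a `ℂ`-basis of the form `(εᵢ^a (g k))` with `k < r`, `a < cᵢ`. -/
def HRep.LocFreeRank (M : HRep n cdeg Ω C) (i : Fin n)
    (U : Submodule ℂ (M.carrier i)) (r : ℕ) : Prop :=
  ∃ g : Fin r → M.carrier i, (∀ k, g k ∈ U) ∧
    LinearIndependent ℂ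
      (fun p : Fin r × Fin (cdeg i) => ((M.eps i) ^ (p.2 : ℕ)) (g p.1)) ∧
    U = Submodule.span ℂ
      (Set.range (fun p : Fin r × Fin (cdeg i) => ((M.eps i) ^ (p.2 : ℕ)) (g p.1)))

/-- The quiver Grassmannian `Gr_{l.f.}(r, M)` of locally free subrepresentations with
rank vector `r` (as a set; in the paper it is a quasi-projective variety). -/
def HRep.GrLF (M : HRep n cdeg Ω C) (r : Fin n → ℕ) :
    Set (∀ i, Submodule ℂ (M.carrier i)) :=
  {U | M.IsSub U ∧ ∀ i, M.LocFreeRank i (U i) (r i)}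

private lemma prodMap_pow {A B : Type} [AddCommGroup A] [Module ℂ A]
    [AddCommGroup B] [Module ℂ B] (f : A →ₗ[ℂ] A) (g : B →ₗ[ℂ] B) (k : ℕ) :
    (f.prodMap g) ^ k = (f ^ k).prodMap (g ^ k) := by
  induction k with
  | zero => simp
  | succ k ih => rw [pow_succ, pow_succ, pow_succ, ih, LinearMap.prodMap_mul]

/-- The direct sum `M ⊕ N` of two `H`-modules. -/
def HRep.dsum (M N : HRep n cdeg Ω C) : HRep n cdeg Ω C where
  carrier i := M.carrier i × N.carrier i
  eps i := (M.eps i).prodMap (N.eps i)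
  arrow i j := (M.arrow i j).prodMap (N.arrow i j)
  arrow_zero i j h := by
    try dsimp only
    rw [M.arrow_zero i j h, N.arrow_zero i j h]
    ext x <;> simp
  nil i := by
    try dsimp only
    rw [prodMap_pow, M.nil, N.nil]
    ext x <;> simp
  rel i j h := by
    try dsimp only
    simp only [prodMap_pow, LinearMap.prodMap_comp, M.rel i j h, N.rel i j h]

/-! ### The type `B₂` algebra `H` and its indecomposable injective module `I₁`

`H` is given by the quiver with vertices `1, 2` (here `0, 1`), a loop `ε₁` at vertex `1`
with `ε₁² = 0`, and an arrow `α : 2 → 1`; `C = !![2,-1;-2,2]`, `D = diag(2,1)`,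
`Ω = {(1,2)}`. -/

abbrev cdegB2 : Fin 2 → ℕ := ![2, 1]
abbrev ΩB2 : Set (Fin 2 × Fin 2) := {((0 : Fin 2), (1 : Fin 2))}
abbrev CB2 : Matrix (Fin 2) (Fin 2) ℤ := !![2, -1; -2, 2]

/-- The action of `ε₁` on `M₁ ≅ H₁ = ℂ[ε₁]/(ε₁²)` (basis `1, ε₁`): `v ↦ (0, v 0)`. -/
noncomputable def epsB2 : (Fin 2 → ℂ) →ₗ[ℂ] (Fin 2 → ℂ) :=
  (LinearMap.single ℂ (fun _ : Fin 2 => ℂ) 1).comp (LinearMap.proj 0)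

lemma epsB2_sq : epsB2 ^ 2 = 0 := by
  ext v j
  simp [epsB2, pow_two, Pi.single_apply]

/-- The indecomposable injective `H`-module `I₁` in type `B₂`: rank vector `(1,2)`,
dimension vector `(2,2)`, with `M₁ ≅ H₁`, `M₂ ≅ ℂ²` and the arrow map an isomorphism. -/
noncomputable def I₁ : HRep 2 cdegB2 ΩB2 CB2 where
  carrier _ := Fin 2 → ℂ
  eps := ![epsB2, 0]
  arrow i j := if i = 0 ∧ j = 1 then LinearMap.id else 0
  arrow_zero i j h := by
    fin_cases i <;> fin_cases j <;> simp_all [ΩB2]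
  nil i := by
    fin_cases i
    · simpa using epsB2_sq
    · simp
  rel i j h := by
    have : i = 0 ∧ j = 1 := by
      have := Set.mem_singleton_iff.mp h
      exact ⟨congrArg Prod.fst this, congrArg Prod.snd this⟩
    obtain ⟨rfl, rfl⟩ := this
    have h2 : ((CB2 1 0).natAbs) = 2 := by decide
    have h1 : ((CB2 0 1).natAbs) = 1 := by decide
    rw [h1, h2]
    show (![epsB2, 0] 0 ^ 2) ∘ₗ _ = _ ∘ₗ (![epsB2, 0] 1 ^ 1)
    simp [epsB2_sq]

section AuxStmt18

open Module MvPolynomial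

lemma I1_eps0 : I₁.eps 0 = epsB2 := rfl
lemma I1_eps1 : I₁.eps 1 = 0 := rfl
lemma I1_arrow01 : I₁.arrow 0 1 = LinearMap.id := rfl
lemma I1_arrow00 : I₁.arrow 0 0 = 0 := rfl
lemma I1_arrow10 : I₁.arrow 1 0 = 0 := rfl
lemma I1_arrow11 : I₁.arrow 1 1 = 0 := rfl

lemma finrank_pi2 : finrank ℂ (Fin 2 → ℂ) = 2 := by simp

lemma lfr0_zero (U : Submodule ℂ (Fin 2 → ℂ)) :
    I₁.LocFreeRank 0 U 0 ↔ U = ⊥ := by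
  constructor
  · rintro ⟨g, -, -, hU⟩
    rw [hU, Set.range_eq_empty, Submodule.span_empty]; rfl
  · rintro rfl
    exact ⟨Fin.elim0, fun k => k.elim0, linearIndependent_empty_type,
      by rw [Set.range_eq_empty, Submodule.span_empty]; rfl⟩

lemma lfr0_one (U : Submodule ℂ (Fin 2 → ℂ)) :
    I₁.LocFreeRank 0 U 1 ↔ U = ⊤ := by
  haveI : Nonempty (Fin 1 × Fin (cdegB2 0)) := ⟨(0, ⟨0, Nat.zero_lt_two⟩)⟩
  constructor
  · rintro ⟨g, -, hli, hU⟩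
    rw [hU]
    refine hli.span_eq_top_of_card_eq_finrank ?_
    show Fintype.card (Fin 1 × Fin (cdegB2 0)) = finrank ℂ (Fin 2 → ℂ)
    simp [cdegB2]; rfl
  · rintro rfl
    refine ⟨fun _ => Pi.single 0 1, fun _ => trivial, ?_, ?_⟩ <;>
    · have hfam' : (fun p : Fin 1 × Fin 2 =>
          ((epsB2 ^ ((p.2 : ℕ))) ((fun _ : Fin 1 => (Pi.single 0 1 : Fin 2 → ℂ)) p.1)))
          = (fun p : Fin 1 × Fin 2 => (Pi.basisFun ℂ (Fin 2)) p.2) := by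
        funext p
        obtain ⟨k, a⟩ := p
        fin_cases a <;> simp [epsB2, LinearMap.single_apply]
      have hfam : (fun p : Fin 1 × Fin (cdegB2 0) =>
          ((I₁.eps 0) ^ ((p.2 : ℕ))) ((fun _ : Fin 1 => (Pi.single 0 1 : Fin 2 → ℂ)) p.1))
          = (fun p : Fin 1 × Fin (cdegB2 0) => (Pi.basisFun ℂ (Fin 2)) (p.2 : Fin 2)) := hfam'
      rw [hfam]
      first
      | exact (Pi.basisFun ℂ (Fin 2)).linearIndependent.comp
          (fun p : Fin 1 × Fin (cdegB2 0) => (p.2 : Fin 2))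
          (fun a b h => Prod.ext (Subsingleton.elim _ _) h)
      | · have hr : Set.range (fun p : Fin 1 × Fin (cdegB2 0) =>
              (Pi.basisFun ℂ (Fin 2)) (p.2 : Fin 2))
              = Set.range (Pi.basisFun ℂ (Fin 2)) :=
            Function.Surjective.range_comp
              (f := fun p : Fin 1 × Fin (cdegB2 0) => (p.2 : Fin 2))
              (fun x => ⟨(0, x), rfl⟩) (Pi.basisFun ℂ (Fin 2))
          erw [hr, (Pi.basisFun ℂ (Fin 2)).span_eq]

lemma lfr0_le_one (U : Submodule ℂ (Fin 2 → ℂ)) (r : ℕ)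
    (h : I₁.LocFreeRank 0 U r) : r ≤ 1 := by
  obtain ⟨g, -, hli, -⟩ := h
  haveI : Module.Finite ℂ (I₁.carrier 0) := inferInstanceAs (Module.Finite ℂ (Fin 2 → ℂ))
  have h2 := hli.fintype_card_le_finrank
  have h3 : Fintype.card (Fin r × Fin (cdegB2 0)) = r * 2 := by rw [Fintype.card_eq_nat_card]; simp [cdegB2]
  have h4 : finrank ℂ (I₁.carrier 0) = 2 := finrank_pi2
  omega

lemma pow_fin1_fix {M : Type} [AddCommGroup M] [Module ℂ M] (f : M →ₗ[ℂ] M)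
    {r : ℕ} (g : Fin r → M) :
    (fun p : Fin r × Fin (cdegB2 1) => (f ^ ((p.2 : ℕ))) (g p.1)) = fun p => g p.1 := by
  funext p
  have h1 : ((p.2 : ℕ)) < 1 := p.2.isLt
  have h0 : ((p.2 : ℕ)) = 0 := by omega
  rw [h0, pow_zero, Module.End.one_apply]

lemma lfr1 (U : Submodule ℂ (Fin 2 → ℂ)) (r : ℕ) :
    I₁.LocFreeRank 1 U r ↔ finrank ℂ U = r := by
  haveI : Nonempty (Fin (cdegB2 1)) := ⟨⟨0, Nat.zero_lt_one⟩⟩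
  have hinj : Function.Injective (fun k : Fin r => ((k, ⟨0, Nat.zero_lt_one⟩) : Fin r × Fin (cdegB2 1))) := by
    intro a b h
    exact congrArg Prod.fst h
  constructor
  · rintro ⟨g, -, hli, hU⟩
    rw [pow_fin1_fix (I₁.eps 1) g] at hli hU
    have hg : LinearIndependent ℂ g := hli.comp (fun k : Fin r => ((k, ⟨0, Nat.zero_lt_one⟩) : Fin r × Fin (cdegB2 1))) hinj
    have hrange : Set.range (fun p : Fin r × Fin (cdegB2 1) => g p.1) = Set.range g :=
      Function.Surjective.range_comp Prod.fst_surjective g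
    rw [hU, hrange]
    exact (finrank_span_eq_card hg).trans (Fintype.card_fin r)
  · intro hU
    set b := Module.finBasisOfFinrankEq ℂ U hU with hb
    refine ⟨fun k => (b k : Fin 2 → ℂ), fun k => (b k).2, ?_, ?_⟩
    · rw [pow_fin1_fix (I₁.eps 1) (fun k => ((b k : Fin 2 → ℂ)))]
      have hli : LinearIndependent ℂ (fun k => ((b k : Fin 2 → ℂ))) :=
        b.linearIndependent.map' U.subtype (Submodule.ker_subtype U)
      have hfst : Function.Injective (Prod.fst : Fin r × Fin (cdegB2 1) → Fin r) := by
        intro a c h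
        have ha : ((a.2 : ℕ)) < 1 := a.2.isLt
        have hc : ((c.2 : ℕ)) < 1 := c.2.isLt
        exact Prod.ext h (Fin.ext (by omega))
      exact hli.comp Prod.fst hfst
    · rw [pow_fin1_fix (I₁.eps 1) (fun k => ((b k : Fin 2 → ℂ)))]
      have hrange : Set.range (fun p : Fin r × Fin (cdegB2 1) => ((b p.1 : Fin 2 → ℂ)))
          = Set.range (fun k => ((b k : Fin 2 → ℂ))) :=
        Function.Surjective.range_comp Prod.fst_surjective (fun k => ((b k : Fin 2 → ℂ)))
      erw [hrange, show (fun k => ((b k : Fin 2 → ℂ))) = U.subtype ∘ b from rfl,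
        Set.range_comp, Submodule.span_image U.subtype, b.span_eq,
        Submodule.map_subtype_top]

lemma lfr1_zero (U : Submodule ℂ (Fin 2 → ℂ)) :
    I₁.LocFreeRank 1 U 0 ↔ U = ⊥ := by
  constructor
  · rintro ⟨g, -, -, hU⟩
    rw [hU, Set.range_eq_empty, Submodule.span_empty]; rfl
  · rintro rfl
    exact ⟨Fin.elim0, fun k => k.elim0, linearIndependent_empty_type,
      by rw [Set.range_eq_empty, Submodule.span_empty]; rfl⟩

lemma sub_eq_top_of_finrank (V : Submodule ℂ (Fin 2 → ℂ))
    (h : Module.finrank ℂ V = 2) : V = ⊤ :=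
  Submodule.eq_top_of_finrank_eq (by rw [h, finrank_pi2])

lemma sub_finrank_le (V : Submodule ℂ (Fin 2 → ℂ)) : Module.finrank ℂ V ≤ 2 :=
  (Submodule.finrank_le V).trans_eq finrank_pi2

lemma isSub_le (U : ∀ i, Submodule ℂ (I₁.carrier i)) (h : I₁.IsSub U) :
    U 1 ≤ U 0 := by
  have := h.2 0 1
  erw [I1_arrow01, Submodule.map_id] at this; exact this

lemma isSub_mk (U : ∀ i, Submodule ℂ (I₁.carrier i)) (h01 : U 1 ≤ U 0)
    (h0 : U 0 = ⊥ ∨ U 0 = ⊤) : I₁.IsSub U := by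
  constructor
  · intro i
    fin_cases i
    · show Submodule.map (I₁.eps 0) (U 0) ≤ U 0
      rcases h0 with h | h <;> rw [h]
      · simp
      · exact le_top
    · show Submodule.map (I₁.eps 1) (U 1) ≤ U 1
      rw [I1_eps1, Submodule.map_zero]
      exact bot_le
  · intro i j
    fin_cases i <;> fin_cases j
    · show Submodule.map (I₁.arrow 0 0) (U 0) ≤ U 0
      rw [I1_arrow00, Submodule.map_zero]; exact bot_le
    · show Submodule.map (I₁.arrow 0 1) (U 1) ≤ U 0
      erw [I1_arrow01, Submodule.map_id]; exact h01
    · show Submodule.map (I₁.arrow 1 0) (U 0) ≤ U 1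
      rw [I1_arrow10, Submodule.map_zero]; exact bot_le
    · show Submodule.map (I₁.arrow 1 1) (U 1) ≤ U 1
      rw [I1_arrow11, Submodule.map_zero]; exact bot_le

lemma grlf_mem (a b : ℕ) (U : ∀ i, Submodule ℂ (I₁.carrier i)) :
    U ∈ I₁.GrLF ![a, b] ↔
      I₁.IsSub U ∧ I₁.LocFreeRank 0 (U 0) a ∧ I₁.LocFreeRank 1 (U 1) b := by
  constructor
  · rintro ⟨h1, h2⟩
    exact ⟨h1, by simpa using h2 0, by simpa using h2 1⟩
  · rintro ⟨h1, h2, h3⟩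
    exact ⟨h1, fun i => by fin_cases i <;> simpa⟩

end AuxStmt18
open Module MvPolynomial in
private lemma efof_symm (a b : ℕ) : (Finsupp.equivFunOnFinite.symm ![a, b] : Fin 2 →₀ ℕ)
    = Finsupp.single 0 a + Finsupp.single 1 b := by
  ext i
  fin_cases i <;> simp [Finsupp.equivFunOnFinite] <;> rfl

/-- For the indecomposable injective module `I₁` (rank vector `(1,2)`) of
the type `B₂` algebra `H`, the variety of locally free submodules of rank vector `(1,1)`
is isomorphic to `ℙ¹(ℂ)` (hence has Euler characteristic `2`); for the rank vectors
`(0,0), (1,0), (1,2)` the submodule variety is a point; all other rank vectors give the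
empty variety.  Consequently `F_{I₁}(t₁,t₂) = 1 + t₁ + 2 t₁t₂ + t₁t₂²`, where `χ` is any
Euler characteristic (`χ(∅) = 0`, `χ(pt) = 1`, `χ(ℙ¹) = 2`). -/
theorem stmt_18
    (chi : Set (∀ i, Submodule ℂ (I₁.carrier i)) → ℤ)
    (hchi0 : chi ∅ = 0)
    (hchi1 : ∀ S : Set (∀ i, Submodule ℂ (I₁.carrier i)), (∃ U, S = {U}) → chi S = 1)
    (hchiP : ∀ S : Set (∀ i, Submodule ℂ (I₁.carrier i)),
      Nonempty (S ≃ Projectivization ℂ (Fin 2 → ℂ)) → chi S = 2) :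
    Nonempty (I₁.GrLF ![1, 1] ≃ Projectivization ℂ (Fin 2 → ℂ)) ∧
    (∀ r ∈ ({![0,0], ![1,0], ![1,2]} : Set (Fin 2 → ℕ)), ∃ U, I₁.GrLF r = {U}) ∧
    (∀ r : Fin 2 → ℕ, r ∉ ({![0,0], ![1,0], ![1,1], ![1,2]} : Set (Fin 2 → ℕ)) →
      I₁.GrLF r = ∅) ∧
    (∑ r ∈ Finset.Iic ![1, 2],
        MvPolynomial.monomial (Finsupp.equivFunOnFinite.symm r) (chi (I₁.GrLF r)))
      = (1 + MvPolynomial.X 0 + 2 * (MvPolynomial.X 0 * MvPolynomial.X 1)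
          + MvPolynomial.X 0 * MvPolynomial.X 1 ^ 2 : MvPolynomial (Fin 2) ℤ) := by
  classical
  -- the four non-empty Grassmannians
  have h00 : I₁.GrLF ![0, 0] = {(fun _ => ⊥ : ∀ i, Submodule ℂ (I₁.carrier i))} := by
    ext U
    rw [Set.mem_singleton_iff]
    constructor
    · intro hU
      obtain ⟨hs, h0, h1⟩ := (grlf_mem 0 0 U).1 hU
      have hU0 : U 0 = ⊥ := (lfr0_zero (U 0)).1 h0
      have hU1 : U 1 = ⊥ := le_bot_iff.1 (hU0 ▸ isSub_le U hs)
      funext i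
      fin_cases i
      · exact hU0
      · exact hU1
    · rintro rfl
      exact (grlf_mem 0 0 _).2 ⟨isSub_mk _ le_rfl (Or.inl rfl), (lfr0_zero _).2 rfl,
        (lfr1 ⊥ 0).2 (finrank_bot ℂ _)⟩
  have h10 : I₁.GrLF ![1, 0]
      = {(fun i => if i = 0 then ⊤ else ⊥ : ∀ i, Submodule ℂ (I₁.carrier i))} := by
    ext U
    rw [Set.mem_singleton_iff]
    constructor
    · intro hU
      obtain ⟨hs, h0, h1⟩ := (grlf_mem 1 0 U).1 hU
      have hU0 : U 0 = ⊤ := (lfr0_one (U 0)).1 h0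
      have hU1 : U 1 = ⊥ := (lfr1_zero (U 1)).1 h1
      funext i
      fin_cases i
      · exact hU0
      · exact hU1
    · rintro rfl
      refine (grlf_mem 1 0 _).2 ⟨isSub_mk _ bot_le (Or.inr rfl), (lfr0_one _).2 rfl,
        (lfr1 ⊥ 0).2 (finrank_bot ℂ _)⟩
  have h12 : I₁.GrLF ![1, 2] = {(fun _ => ⊤ : ∀ i, Submodule ℂ (I₁.carrier i))} := by
    ext U
    rw [Set.mem_singleton_iff]
    constructor
    · intro hU
      obtain ⟨hs, h0, h1⟩ := (grlf_mem 1 2 U).1 hU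
      have hU0 : U 0 = ⊤ := (lfr0_one (U 0)).1 h0
      have hU1 : U 1 = ⊤ := sub_eq_top_of_finrank (U 1) ((lfr1 (U 1) 2).1 h1)
      funext i
      fin_cases i
      · exact hU0
      · exact hU1
    · rintro rfl
      exact (grlf_mem 1 2 _).2 ⟨isSub_mk _ le_top (Or.inr rfl), (lfr0_one _).2 rfl,
        (lfr1 ⊤ 2).2 (by rw [finrank_top, finrank_pi2])⟩
  have h11 : ∀ U : ∀ i, Submodule ℂ (I₁.carrier i),
      U ∈ I₁.GrLF ![1, 1] ↔ U 0 = ⊤ ∧ Module.finrank ℂ (U 1) = 1 := by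
    intro U
    constructor
    · intro hU
      obtain ⟨hs, h0, h1⟩ := (grlf_mem 1 1 U).1 hU
      exact ⟨(lfr0_one (U 0)).1 h0, (lfr1 (U 1) 1).1 h1⟩
    · rintro ⟨hU0, hU1⟩
      exact (grlf_mem 1 1 U).2 ⟨isSub_mk U (hU0 ▸ le_top) (Or.inr hU0),
        (lfr0_one (U 0)).2 hU0, (lfr1 (U 1) 1).2 hU1⟩
  have e11 : I₁.GrLF ![1, 1] ≃ {H : Submodule ℂ (Fin 2 → ℂ) // Module.finrank ℂ H = 1} :=
    { toFun := fun U => ⟨U.1 1, ((h11 U.1).1 U.2).2⟩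
      invFun := fun H => ⟨(fun i => if i = 0 then ⊤ else H.1 : ∀ i, Submodule ℂ (I₁.carrier i)),
        (h11 _).2 ⟨rfl, H.2⟩⟩
      left_inv := fun U => by
        apply Subtype.ext
        funext i
        fin_cases i
        · exact ((h11 U.1).1 U.2).1.symm
        · rfl
      right_inv := fun H => rfl }
  have hEquiv : Nonempty (↥(I₁.GrLF ![1, 1]) ≃ Projectivization ℂ (Fin 2 → ℂ)) :=
    ⟨e11.trans (Projectivization.equivSubmodule ℂ (Fin 2 → ℂ)).symm⟩
  have hempty : ∀ r : Fin 2 → ℕ,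
      r ∉ ({![0,0], ![1,0], ![1,1], ![1,2]} : Set (Fin 2 → ℕ)) → I₁.GrLF r = ∅ := by
    intro r hr
    rw [Set.eq_empty_iff_forall_notMem]
    intro U hU
    have hrE : r = ![r 0, r 1] := by
      funext i
      fin_cases i <;> rfl
    rw [hrE] at hU hr
    obtain ⟨hs, h0, h1⟩ := (grlf_mem (r 0) (r 1) U).1 hU
    have hr0 : r 0 ≤ 1 := lfr0_le_one (U 0) (r 0) h0
    have hr1 : Module.finrank ℂ (U 1) = r 1 := (lfr1 (U 1) (r 1)).1 h1
    have hr1le : r 1 ≤ 2 := by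
      rw [← hr1]
      exact sub_finrank_le (U 1)
    have hc0 : r 0 = 0 ∨ r 0 = 1 := by omega
    rcases hc0 with hc0 | hc0
    · -- then U = bot and r 1 = 0
      rw [hc0] at h0
      have hU0 : U 0 = ⊥ := (lfr0_zero (U 0)).1 h0
      have hU1 : U 1 = ⊥ := le_bot_iff.1 (hU0 ▸ isSub_le U hs)
      have t1 : Module.finrank ℂ (⊥ : Submodule ℂ (Fin 2 → ℂ)) = r 1 :=
        (lfr1 ⊥ (r 1)).1 (by rw [hU1] at h1; exact h1)
      have hc1 : r 1 = 0 := by rw [← t1, finrank_bot]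
      exact hr (by rw [hc0, hc1]; exact Set.mem_insert _ _)
    · have hc1 : r 1 = 0 ∨ r 1 = 1 ∨ r 1 = 2 := by omega
      rcases hc1 with hc1 | hc1 | hc1
      · exact hr (by
          rw [hc0, hc1]
          exact Set.mem_insert_iff.2 (Or.inr (Set.mem_insert _ _)))
      · exact hr (by
          rw [hc0, hc1]
          exact Set.mem_insert_iff.2 (Or.inr (Set.mem_insert_iff.2
            (Or.inr (Set.mem_insert _ _)))))
      · exact hr (by
          rw [hc0, hc1]
          exact Set.mem_insert_iff.2 (Or.inr (Set.mem_insert_iff.2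
            (Or.inr (Set.mem_insert_iff.2 (Or.inr rfl))))))
  refine ⟨hEquiv, ?_, hempty, ?_⟩
  · intro r hr
    simp only [Set.mem_insert_iff, Set.mem_singleton_iff] at hr
    rcases hr with rfl | rfl | rfl
    exacts [⟨_, h00⟩, ⟨_, h10⟩, ⟨_, h12⟩]
  · -- the generating function identity
    have c00 : chi (I₁.GrLF ![0,0]) = 1 := hchi1 _ ⟨_, h00⟩
    have c10 : chi (I₁.GrLF ![1,0]) = 1 := hchi1 _ ⟨_, h10⟩
    have c12 : chi (I₁.GrLF ![1,2]) = 1 := hchi1 _ ⟨_, h12⟩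
    have c11 : chi (I₁.GrLF ![1,1]) = 2 := hchiP _ hEquiv
    have c01 : chi (I₁.GrLF ![0,1]) = 0 := by
      rw [hempty ![0,1] (by simp [Set.mem_insert_iff, funext_iff, Fin.forall_fin_two])]
      exact hchi0
    have c02 : chi (I₁.GrLF ![0,2]) = 0 := by
      rw [hempty ![0,2] (by simp [Set.mem_insert_iff, funext_iff, Fin.forall_fin_two])]
      exact hchi0
    rw [show (Finset.Iic ![1,2] : Finset (Fin 2 → ℕ))
        = {![0,0],![0,1],![0,2],![1,0],![1,1],![1,2]} from by decide]
    rw [Finset.sum_insert (by decide), Finset.sum_insert (by decide),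
      Finset.sum_insert (by decide), Finset.sum_insert (by decide),
      Finset.sum_insert (by decide), Finset.sum_singleton]
    rw [c00, c01, c02, c10, c11, c12]
    simp only [map_zero, add_zero, zero_add]
    rw [efof_symm, efof_symm, efof_symm, efof_symm]
    simp only [Finsupp.single_zero, add_zero, zero_add]
    rw [show (2 : ℤ) = 1 + 1 by norm_num, map_add]
    rw [show ((MvPolynomial.monomial (Finsupp.single (0 : Fin 2) 1 + Finsupp.single 1 1)) (1:ℤ))
        = MvPolynomial.X 0 * MvPolynomial.X 1 by
      rw [MvPolynomial.monomial_add_single, ← MvPolynomial.X_pow_eq_monomial, pow_one, pow_one]]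
    rw [show ((MvPolynomial.monomial (Finsupp.single (0 : Fin 2) 1 + Finsupp.single 1 2)) (1:ℤ))
        = MvPolynomial.X 0 * MvPolynomial.X 1 ^ 2 by
      rw [MvPolynomial.monomial_add_single, ← MvPolynomial.X_pow_eq_monomial, pow_one]]
    rw [show ((MvPolynomial.monomial (Finsupp.single (0 : Fin 2) 1)) (1:ℤ))
        = MvPolynomial.X 0 by rw [← MvPolynomial.X_pow_eq_monomial, pow_one]]
    rw [show ((MvPolynomial.monomial (0 : Fin 2 →₀ ℕ)) (1:ℤ)) = 1 by
      rw [MvPolynomial.monomial_zero', MvPolynomial.C_1]]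
    ring
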